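/- arXiv:2209.00235 — 4 statements merged into one kernel-verified Lean document; each statement's English description precedes it below -/
import Mathlib

section
/- Let $0<\alpha<1$, $k>0$, $s_0>0$. Define $w_0 = \frac{k^\alpha}{\Gamma(\alpha+2)}$ and, for $j\ge 1$, $w_j = \frac{t_{j+1}^{\alpha+1} - 2t_j^{\alpha+1} + t_{j-1}^{\alpha+1}}{k\,\Gamma(\alpha+2)}$ where $t_j=jk$. Then each $w_j>0$, and there exists a constant $\mathcal{C}_\alpha>0$ depending only on $\alpha$ such that $\sum_{n=0}^\infty w_n e^{-n s_0} \le \frac{k^\alpha}{\Gamma(\alpha+2)}\left(1 + \frac{\mathcal{C}_\alpha}{s_0}\right)$. In particular, if $k^\alpha \le \frac{s_0\,\Gamma(\alpha+2)}{s_0 + \mathcal{C}_\alpha}$, then $\sum_{n=0}^\infty w_n e^{-n s_0} \le 1$. -/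
open Real Set

private lemma rpow_add_two_le {p : ℝ} (hp0 : 0 ≤ p) (hp1 : p ≤ 1) {y : ℝ} (hy : 0 ≤ y) :
    (y + 2) ^ p ≤ y ^ p + 2 ^ p := by
  have h := NNReal.rpow_add_le_add_rpow y.toNNReal 2 hp0 hp1
  have h2 := (NNReal.coe_le_coe).2 h
  simpa [NNReal.coe_rpow, Real.coe_toNNReal y hy] using h2

private lemma second_diff_bound {α : ℝ} (hα0 : 0 < α) (hα1 : α < 1) {j : ℕ} (hj : 1 ≤ j) :
    ((j:ℝ)+1) ^ (α+1) - 2 * (j:ℝ) ^ (α+1) + ((j:ℝ)-1) ^ (α+1) ≤ 4 := by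
  have hp1 : (1:ℝ) ≤ α + 1 := by linarith
  have hj1 : (1:ℝ) ≤ (j:ℝ) := by exact_mod_cast hj
  have hderiv : ∀ x : ℝ, HasDerivAt (fun x : ℝ => x ^ (α+1)) ((α+1) * x ^ α) x := by
    intro x
    have := Real.hasDerivAt_rpow_const (x := x) (p := α+1) (Or.inr hp1)
    simpa using this
  obtain ⟨c, hc, hceq⟩ := exists_hasDerivAt_eq_slope (fun x : ℝ => x ^ (α+1))
    (fun x => (α+1) * x ^ α) (by linarith : (j:ℝ) < (j:ℝ)+1)
    (fun x _ => (hderiv x).continuousAt.continuousWithinAt)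
    (fun x hx => hderiv x)
  obtain ⟨c', hc', hceq'⟩ := exists_hasDerivAt_eq_slope (fun x : ℝ => x ^ (α+1))
    (fun x => (α+1) * x ^ α) (by linarith : (j:ℝ)-1 < (j:ℝ))
    (fun x _ => (hderiv x).continuousAt.continuousWithinAt)
    (fun x hx => hderiv x)
  have e1 : (α+1) * c ^ α = ((j:ℝ)+1) ^ (α+1) - (j:ℝ) ^ (α+1) := by
    simpa using hceq
  have e2 : (α+1) * c' ^ α = (j:ℝ) ^ (α+1) - ((j:ℝ)-1) ^ (α+1) := by
    simpa using hceq'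
  have hc'0 : 0 ≤ c' := by have := hc'.1; linarith
  have hcle : c ≤ c' + 2 := by have := hc.2; have := hc'.1; linarith
  have hca : c ^ α ≤ c' ^ α + 2 := by
    have h1 : c ^ α ≤ (c' + 2) ^ α :=
      Real.rpow_le_rpow (by have := hc.1; linarith) hcle hα0.le
    have h2 : (c' + 2) ^ α ≤ c' ^ α + 2 ^ α := rpow_add_two_le hα0.le hα1.le hc'0
    have h3 : (2:ℝ) ^ α ≤ 2 := by
      calc (2:ℝ) ^ α ≤ (2:ℝ) ^ (1:ℝ) :=
            Real.rpow_le_rpow_of_exponent_le (by norm_num) hα1.le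
        _ = 2 := Real.rpow_one 2
    linarith
  have hgoal : ((j:ℝ)+1) ^ (α+1) - 2 * (j:ℝ) ^ (α+1) + ((j:ℝ)-1) ^ (α+1)
      = (α+1) * (c ^ α - c' ^ α) := by
    rw [mul_sub, e1, e2]; ring
  rw [hgoal]
  have hsub : c ^ α - c' ^ α ≤ 2 := by linarith
  nlinarith [Real.rpow_nonneg hc'0 α, Real.rpow_nonneg (show (0:ℝ) ≤ c by have := hc.1; linarith) α]

theorem stmt_6 (α : ℝ) (hα0 : 0 < α) (hα1 : α < 1) :
    ∃ C : ℝ, 0 < C ∧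
      ∀ (k s0 : ℝ), 0 < k → 0 < s0 →
        ∀ w : ℕ → ℝ,
          (w 0 = k ^ α / Real.Gamma (α + 2)) →
          (∀ j : ℕ, 1 ≤ j →
            w j = ((((j : ℝ) + 1) * k) ^ (α + 1) - 2 * ((j : ℝ) * k) ^ (α + 1)
                      + (((j : ℝ) - 1) * k) ^ (α + 1)) / (k * Real.Gamma (α + 2))) →
          (∀ j : ℕ, 0 < w j) ∧
          Summable (fun n : ℕ => w n * Real.exp (-(n : ℝ) * s0)) ∧
          (∑' n : ℕ, w n * Real.exp (-(n : ℝ) * s0))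
              ≤ k ^ α / Real.Gamma (α + 2) * (1 + C / s0) ∧
          (k ^ α ≤ s0 * Real.Gamma (α + 2) / (s0 + C) →
            (∑' n : ℕ, w n * Real.exp (-(n : ℝ) * s0)) ≤ 1) := by
  refine ⟨4, by norm_num, ?_⟩
  intro k s0 hk hs0 w hw0 hwj
  have hΓ : 0 < Real.Gamma (α + 2) := Real.Gamma_pos_of_pos (by linarith)
  set A := k ^ α / Real.Gamma (α + 2) with hA
  have hApos : 0 < A := div_pos (Real.rpow_pos_of_pos hk α) hΓ
  have hp1 : (1:ℝ) < α + 1 := by linarith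
  -- w j = A * d j for j ≥ 1
  have hwd : ∀ j : ℕ, 1 ≤ j →
      w j = A * (((j:ℝ)+1) ^ (α+1) - 2 * (j:ℝ) ^ (α+1) + ((j:ℝ)-1) ^ (α+1)) := by
    intro j hj
    have hj1 : (1:ℝ) ≤ (j:ℝ) := by exact_mod_cast hj
    rw [hwj j hj, Real.mul_rpow (by linarith) hk.le,
        Real.mul_rpow (by linarith) hk.le, Real.mul_rpow (by linarith) hk.le]
    have hkp : k ^ (α+1) = k ^ α * k := by
      rw [Real.rpow_add hk, Real.rpow_one]
    rw [hkp, hA]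
    field_simp
  have hd_pos : ∀ j : ℕ, 1 ≤ j →
      0 < ((j:ℝ)+1) ^ (α+1) - 2 * (j:ℝ) ^ (α+1) + ((j:ℝ)-1) ^ (α+1) := by
    intro j hj
    have hj1 : (1:ℝ) ≤ (j:ℝ) := by exact_mod_cast hj
    have hsc := strictConvexOn_rpow hp1
    have h := hsc.2 (x := (j:ℝ)-1) (y := (j:ℝ)+1) (Set.mem_Ici.2 (by linarith))
      (Set.mem_Ici.2 (by linarith)) (by intro h; linarith [congrArg id h])
      (by norm_num : (0:ℝ) < 1/2) (by norm_num : (0:ℝ) < 1/2) (by norm_num)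
    simp only [smul_eq_mul] at h
    have hmid : (1/2 : ℝ) * ((j:ℝ)-1) + (1/2) * ((j:ℝ)+1) = (j:ℝ) := by ring
    rw [hmid] at h
    linarith
  have hwpos : ∀ j : ℕ, 0 < w j := by
    intro j
    rcases Nat.eq_zero_or_pos j with h0 | h1
    · rw [h0, hw0]; positivity
    · rw [hwd j h1]; exact mul_pos hApos (hd_pos j h1)
  -- exponential factor
  set r := Real.exp (-s0) with hrdef
  have hr0 : 0 < r := Real.exp_pos _
  have hr1 : r < 1 := Real.exp_lt_one_iff.2 (by linarith)
  have hrn : ∀ n : ℕ, Real.exp (-(n:ℝ) * s0) = r ^ n := by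
    intro n
    rw [show -(n:ℝ) * s0 = (n:ℝ) * (-s0) by ring, Real.exp_nat_mul]
  -- majorant
  set g : ℕ → ℝ := fun n => if n = 0 then A else 4 * A * r ^ n with hg
  have hle : ∀ n : ℕ, w n * Real.exp (-(n:ℝ) * s0) ≤ g n := by
    intro n
    rcases Nat.eq_zero_or_pos n with h0 | h1
    · subst h0; simp [hg, hw0, hA]
    · have hn : n ≠ 0 := by omega
      rw [hrn n, hwd n h1]
      simp only [hg, if_neg hn]
      have hd4 := second_diff_bound hα0 hα1 h1
      have : A * (((n:ℝ)+1) ^ (α+1) - 2 * (n:ℝ) ^ (α+1) + ((n:ℝ)-1) ^ (α+1)) ≤ 4 * A := by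
        nlinarith
      exact mul_le_mul_of_nonneg_right this (by positivity)
  have hfnonneg : ∀ n : ℕ, 0 ≤ w n * Real.exp (-(n:ℝ) * s0) :=
    fun n => mul_nonneg (hwpos n).le (Real.exp_pos _).le
  have hgnonneg : ∀ n : ℕ, 0 ≤ g n := by
    intro n; by_cases h : n = 0 <;> simp [hg, h] <;> positivity
  have hgle : ∀ n : ℕ, g n ≤ 5 * A * r ^ n := by
    intro n
    by_cases h : n = 0
    · simp [hg, h]; nlinarith
    · simp only [hg, if_neg h]; nlinarith [pow_pos hr0 n]
  have hgeom : Summable (fun n : ℕ => 5 * A * r ^ n) :=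
    (summable_geometric_of_lt_one hr0.le hr1).mul_left (5 * A)
  have hgsum : Summable g := Summable.of_nonneg_of_le hgnonneg hgle hgeom
  have hfsum : Summable (fun n : ℕ => w n * Real.exp (-(n:ℝ) * s0)) :=
    Summable.of_nonneg_of_le hfnonneg hle hgsum
  -- r/(1-r) ≤ 1/s0
  have hrs : r * (1 - r)⁻¹ ≤ 1 / s0 := by
    have hkey : r * (s0 + 1) ≤ 1 := by
      have h1 : s0 + 1 ≤ Real.exp s0 := Real.add_one_le_exp s0
      calc r * (s0 + 1) ≤ r * Real.exp s0 :=
            mul_le_mul_of_nonneg_left h1 hr0.le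
        _ = 1 := by rw [hrdef, ← Real.exp_add]; simp
    rw [← div_eq_mul_inv, div_le_div_iff₀ (by linarith) hs0]
    nlinarith
  -- tsum bound
  have htsum_g : ∑' n, g n = A + 4 * A * (r * (1 - r)⁻¹) := by
    rw [Summable.tsum_eq_zero_add hgsum]
    have h0 : g 0 = A := by simp [hg]
    have hs : (fun n : ℕ => g (n + 1)) = fun n : ℕ => (4 * A * r) * r ^ n := by
      funext n
      simp only [hg, if_neg (Nat.succ_ne_zero n)]
      rw [pow_succ]; ring
    rw [h0, hs, tsum_mul_left, tsum_geometric_of_lt_one hr0.le hr1]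
    ring
  have hmain : (∑' n : ℕ, w n * Real.exp (-(n:ℝ) * s0)) ≤ A * (1 + 4 / s0) := by
    have h1 : (∑' n : ℕ, w n * Real.exp (-(n:ℝ) * s0)) ≤ ∑' n, g n :=
      Summable.tsum_le_tsum hle hfsum hgsum
    have h2 : 4 * A * (r * (1 - r)⁻¹) ≤ 4 * A * (1 / s0) :=
      mul_le_mul_of_nonneg_left hrs (by positivity)
    have h3 : A * (1 + 4 / s0) = A + 4 * A * (1 / s0) := by ring
    rw [htsum_g] at h1
    linarith
  refine ⟨hwpos, hfsum, hmain, ?_⟩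
  intro hks
  have h1 : k ^ α * (s0 + 4) ≤ s0 * Real.Gamma (α + 2) := by
    rw [le_div_iff₀ (by linarith)] at hks
    linarith
  have h2 : A * (1 + 4 / s0) ≤ 1 := by
    rw [hA, div_mul_eq_mul_div, div_le_one hΓ]
    have : k ^ α * (1 + 4 / s0) = k ^ α * (s0 + 4) / s0 := by field_simp
    rw [this, div_le_iff₀ hs0]
    nlinarith
  linarith
end

section
/- Let $(g_j)_{j\ge0}$ be a real sequence with $\sum_j |g_j| r^{-j} < \infty$ for every $r>1$, so that $G(z)=\sum_{j\ge0} g_j z^{-j}$ is analytic on $\mathbf{D}=\{z\in\mathbb{C}: |z|>1\}$. If $\Re G(z) \ge 0$ for all $z\in\mathbf{D}$, then for every integer $M\ge 0$ and all real numbers $W_0, W_1, \dots, W_M$, $\sum_{j=0}^M \left(\sum_{p=0}^j g_p W_{j-p}\right) W_j \ge 0$. -/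
set_option maxHeartbeats 2000000

open Finset Filter Complex


lemma rootsum (N : ℕ) (hN : 0 < N) (a : ℤ) :
    ∑ m ∈ Finset.range N, (Complex.exp (2 * Real.pi * Complex.I / N) ^ a) ^ m
      = if (N : ℤ) ∣ a then (N : ℂ) else 0 := by
  have hNC : (N : ℂ) ≠ 0 := Nat.cast_ne_zero.2 hN.ne'
  have h2 : (2 * (Real.pi : ℂ) * Complex.I) ≠ 0 := by
    simp [Real.pi_ne_zero, Complex.I_ne_zero]
  have hζa : Complex.exp (2 * Real.pi * Complex.I / N) ^ a
      = Complex.exp ((a : ℂ) * (2 * Real.pi * Complex.I) / N) := by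
    rw [← Complex.exp_int_mul]; ring_nf
  rw [hζa]
  by_cases hdvd : (N : ℤ) ∣ a
  · obtain ⟨q, rfl⟩ := hdvd
    have : ((N * q : ℤ) : ℂ) * (2 * Real.pi * Complex.I) / N
        = (q : ℂ) * (2 * Real.pi * Complex.I) := by
      push_cast; field_simp
    rw [this, Complex.exp_int_mul_two_pi_mul_I]
    simp
  · set ζ := Complex.exp ((a : ℂ) * (2 * Real.pi * Complex.I) / N) with hζ
    have hζ1 : ζ ≠ 1 := by
      intro h
      rw [hζ, Complex.exp_eq_one_iff] at h
      obtain ⟨n, hn⟩ := h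
      apply hdvd
      refine ⟨n, ?_⟩
      field_simp at hn
      have h3 : (a : ℂ) * (2 * Real.pi * Complex.I) = ((n * N : ℤ) : ℂ) * (2 * Real.pi * Complex.I) := by
        push_cast; linear_combination (2 * (Real.pi:ℂ) * Complex.I) * hn
      have := mul_right_cancel₀ h2 h3
      have h4 : a = n * N := by exact_mod_cast this
      rw [h4]; ring
    rw [geom_sum_eq hζ1]
    have hζN : ζ ^ N = 1 := by
      rw [hζ, ← Complex.exp_nat_mul]
      have : (N : ℂ) * ((a : ℂ) * (2 * Real.pi * Complex.I) / N) = (a:ℂ) * (2 * Real.pi * Complex.I) := by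
        field_simp
      rw [this, Complex.exp_int_mul_two_pi_mul_I]
    rw [hζN]; simp [hdvd]


lemma tri (f : ℕ → ℕ → ℝ) : ∀ n : ℕ,
    ∑ j ∈ range n, ∑ p ∈ range (j + 1), f p (j - p)
      = ∑ p ∈ range n, ∑ j ∈ range (n - p), f p j := by
  intro n
  induction n with
  | zero => simp
  | succ n ih =>
    rw [Finset.sum_range_succ, ih, Finset.sum_range_succ (fun p => ∑ j ∈ range (n + 1 - p), f p j)]
    have h1 : ∀ p ∈ range n, ∑ j ∈ range (n + 1 - p), f p j
        = ∑ j ∈ range (n - p), f p j + f p (n - p) := by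
      intro p hp
      rw [mem_range] at hp
      have : n + 1 - p = (n - p) + 1 := by omega
      rw [this, Finset.sum_range_succ]
    rw [Finset.sum_congr rfl h1, Finset.sum_add_distrib]
    have h2 : ∑ p ∈ range (n + 1), f p (n - p)
        = ∑ p ∈ range n, f p (n - p) + f n (n - n) := Finset.sum_range_succ _ _
    rw [h2]
    simp [Nat.sub_self]
    ring

lemma core (c w : ℕ → ℝ) (M : ℕ) (hc : Summable fun p => |c p|)
    (hcirc : ∀ v : ℂ, ‖v‖ = 1 → 0 ≤ (∑' p : ℕ, (c p : ℂ) * v ^ p).re) :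
    0 ≤ ∑ j ∈ Finset.range (M + 1),
          (∑ p ∈ Finset.range (j + 1), c p * w (j - p)) * w j := by
  set S : ℝ := ∑ j ∈ Finset.range (M + 1),
      (∑ p ∈ Finset.range (j + 1), c p * w (j - p)) * w j with hS
  set B : ℝ := ∑ j ∈ range (M+1), ∑ k ∈ range (M+1), |w j| * |w k| with hB
  -- key inequality for each q
  have key : ∀ q : ℕ, -((∑' i : ℕ, |c (i + (q+1))|) * B) ≤ S := by
    intro q
    set N : ℕ := M + 1 + q with hNdef
    have hN : 0 < N := by omega
    have hMN : M < N := by omega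
    set ζ : ℂ := Complex.exp (2 * Real.pi * Complex.I / N) with hζdef
    have hζ0 : ζ ≠ 0 := Complex.exp_ne_zero _
    have habsζ : ‖ζ‖ = 1 := by
      rw [hζdef, Complex.norm_exp]
      have : (2 * (Real.pi:ℂ) * Complex.I / N).re = 0 := by
        simp [Complex.div_re]
      rw [this, Real.exp_zero]
    set v : ℕ → ℂ := fun m => ζ ^ m with hvdef
    have habsv : ∀ m, ‖v m‖ = 1 := by
      intro m; rw [hvdef]; simp [map_pow, habsζ]
    set P : ℕ → ℂ := fun m => ∑ j ∈ range (M+1), (w j : ℂ) * v m ^ j with hPdef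
    set G : ℕ → ℂ := fun m => ∑' p : ℕ, (c p : ℂ) * v m ^ p with hGdef
    have hsumG : ∀ m, Summable (fun p : ℕ => (c p : ℂ) * v m ^ p) := by
      intro m
      apply Summable.of_norm_bounded hc
      intro p
      rw [norm_mul, norm_pow, habsv]
      simp
    have hconjv : ∀ m, (starRingEnd ℂ) (v m) = (ζ⁻¹) ^ m := by
      intro m
      rw [← Complex.inv_eq_conj (habsv m), inv_pow]
    have hprod : ∀ m p j k : ℕ,
        v m ^ p * v m ^ j * (starRingEnd ℂ) (v m) ^ k = (ζ ^ ((p:ℤ) + j - k)) ^ m := by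
      intro m p j k
      rw [hconjv]
      rw [hvdef]
      simp only [← pow_mul, inv_pow]
      rw [← zpow_natCast ζ (m*p), ← zpow_natCast ζ (m*j), ← zpow_natCast ζ (m*k),
        ← zpow_neg, ← zpow_add₀ hζ0, ← zpow_add₀ hζ0,
        ← zpow_natCast (ζ ^ ((p:ℤ) + j - k)) m, ← zpow_mul]
      congr 1
      push_cast
      ring
    -- positivity of the discrete average
    have h0 : 0 ≤ ∑ m ∈ range N, (G m * (P m * (starRingEnd ℂ) (P m))).re := by
      apply Finset.sum_nonneg
      intro m _
      rw [Complex.mul_conj]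
      have : (G m * ↑(Complex.normSq (P m))).re = (G m).re * Complex.normSq (P m) := by
        simp [Complex.mul_re]
      rw [this]
      exact mul_nonneg (hcirc (v m) (habsv m)) (Complex.normSq_nonneg _)
    -- the computation
    have hstep3 : ∀ p : ℕ, ∑ m ∈ range N, (c p:ℂ) * v m ^ p * (P m * (starRingEnd ℂ) (P m))
        = ∑ j ∈ range (M+1), ∑ k ∈ range (M+1),
            (c p:ℂ) * w j * w k * (if (N:ℤ) ∣ ((p:ℤ)+j-k) then (N:ℂ) else 0) := by
      intro p
      have hexp : ∀ m, (c p:ℂ) * v m ^ p * (P m * (starRingEnd ℂ) (P m))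
          = ∑ j ∈ range (M+1), ∑ k ∈ range (M+1),
              (c p:ℂ) * w j * w k * (v m ^ p * v m ^ j * (starRingEnd ℂ) (v m) ^ k) := by
        intro m
        have hconjP : (starRingEnd ℂ) (P m)
            = ∑ k ∈ range (M+1), (w k : ℂ) * (starRingEnd ℂ) (v m) ^ k := by
          rw [hPdef]
          rw [map_sum]
          apply Finset.sum_congr rfl
          intro k _
          rw [map_mul, map_pow, Complex.conj_ofReal]
        rw [hconjP, hPdef]
        rw [Finset.sum_mul_sum]
        rw [Finset.mul_sum]
        apply Finset.sum_congr rfl; intro j _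
        rw [Finset.mul_sum]
        apply Finset.sum_congr rfl; intro k _
        ring
      rw [Finset.sum_congr rfl (fun m _ => hexp m)]
      rw [Finset.sum_comm]
      apply Finset.sum_congr rfl; intro j _
      rw [Finset.sum_comm]
      apply Finset.sum_congr rfl; intro k _
      rw [← Finset.mul_sum]
      congr 1
      calc ∑ i ∈ range N, v i ^ p * v i ^ j * (starRingEnd ℂ) (v i) ^ k
          = ∑ i ∈ range N, (ζ ^ ((p:ℤ)+j-k)) ^ i :=
            Finset.sum_congr rfl (fun m _ => hprod m p j k)
        _ = _ := rootsum N hN ((p:ℤ) + j - k)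
    have hA : ∑ m ∈ range N, G m * (P m * (starRingEnd ℂ) (P m))
        = ∑' p : ℕ, ∑ j ∈ range (M+1), ∑ k ∈ range (M+1),
            (c p : ℂ) * w j * w k * (if (N:ℤ) ∣ ((p:ℤ)+j-k) then (N:ℂ) else 0) := by
      have h1 : ∀ m ∈ range N, G m * (P m * (starRingEnd ℂ) (P m))
          = ∑' p : ℕ, (c p:ℂ) * v m ^ p * (P m * (starRingEnd ℂ) (P m)) := by
        intro m _
        rw [hGdef, tsum_mul_right]
      rw [Finset.sum_congr rfl h1,
        ← Summable.tsum_finsetSum (fun m _ => (hsumG m).mul_right _)]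
      exact tsum_congr hstep3
    have hsum2 : Summable (fun p : ℕ => ∑ j ∈ range (M+1), ∑ k ∈ range (M+1),
        (c p : ℂ) * w j * w k * (if (N:ℤ) ∣ ((p:ℤ)+j-k) then (N:ℂ) else 0)) := by
      set C : ℝ := ∑ j ∈ range (M+1), ∑ k ∈ range (M+1), |w j| * |w k| * N with hC
      apply Summable.of_norm_bounded (hc.mul_right C)
      intro p
      calc ‖∑ j ∈ range (M+1), ∑ k ∈ range (M+1),
              (c p:ℂ) * w j * w k * (if (N:ℤ) ∣ ((p:ℤ)+j-k) then (N:ℂ) else 0)‖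
          ≤ ∑ j ∈ range (M+1), ‖∑ k ∈ range (M+1),
              (c p:ℂ) * w j * w k * (if (N:ℤ) ∣ ((p:ℤ)+j-k) then (N:ℂ) else 0)‖ :=
            norm_sum_le _ _
        _ ≤ ∑ j ∈ range (M+1), ∑ k ∈ range (M+1),
              ‖(c p:ℂ) * w j * w k * (if (N:ℤ) ∣ ((p:ℤ)+j-k) then (N:ℂ) else 0)‖ :=
            Finset.sum_le_sum (fun j _ => norm_sum_le _ _)
        _ ≤ ∑ j ∈ range (M+1), ∑ k ∈ range (M+1), |c p| * (|w j| * |w k| * N) := by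
            apply Finset.sum_le_sum; intro j _
            apply Finset.sum_le_sum; intro k _
            have hite : ‖(if (N:ℤ) ∣ ((p:ℤ)+j-k) then (N:ℂ) else 0)‖ ≤ (N:ℝ) := by
              split_ifs
              · rw [Complex.norm_natCast]
              · simp
            calc ‖(c p:ℂ) * w j * w k * (if (N:ℤ) ∣ ((p:ℤ)+j-k) then (N:ℂ) else 0)‖
                = |c p| * |w j| * |w k| * ‖(if (N:ℤ) ∣ ((p:ℤ)+j-k) then (N:ℂ) else 0)‖ := by
                  rw [norm_mul, norm_mul, norm_mul, Complex.norm_real, Complex.norm_real,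
                    Complex.norm_real, Real.norm_eq_abs, Real.norm_eq_abs, Real.norm_eq_abs]
              _ ≤ |c p| * |w j| * |w k| * N := by gcongr
              _ = |c p| * (|w j| * |w k| * N) := by ring
        _ = |c p| * C := by
            rw [hC, Finset.mul_sum]
            exact Finset.sum_congr rfl fun j _ => by rw [Finset.mul_sum]
    have hcalc : ∑ m ∈ range N, (G m * (P m * (starRingEnd ℂ) (P m))).re
        = ∑' p : ℕ, ∑ j ∈ range (M+1), ∑ k ∈ range (M+1),
            c p * w j * w k * (if (N:ℤ) ∣ ((p:ℤ)+j-k) then (N:ℝ) else 0) := by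
      rw [← Complex.re_sum, hA, Complex.re_tsum hsum2]
      apply tsum_congr
      intro p
      rw [Complex.re_sum]
      apply Finset.sum_congr rfl
      intro j _
      rw [Complex.re_sum]
      apply Finset.sum_congr rfl
      intro k _
      have : (c p : ℂ) * w j * w k * (if (N:ℤ) ∣ ((p:ℤ)+j-k) then (N:ℂ) else 0)
          = ((c p * w j * w k * (if (N:ℤ) ∣ ((p:ℤ)+j-k) then (N:ℝ) else 0) : ℝ) : ℂ) := by
        push_cast [apply_ite (fun x : ℝ => (x : ℂ))]
        ring
      rw [this, Complex.ofReal_re]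
    -- decomposition into main term and error term
    set s : ℕ → ℝ := fun p => ∑ j ∈ range (M+1), ∑ k ∈ range (M+1),
        c p * w j * w k * (if ((p:ℤ)+j-k = 0) then (1:ℝ) else 0) with hsdef
    set e : ℕ → ℝ := fun p => ∑ j ∈ range (M+1), ∑ k ∈ range (M+1),
        c p * w j * w k * ((if (N:ℤ) ∣ ((p:ℤ)+j-k) then (1:ℝ) else 0)
          - (if ((p:ℤ)+j-k = 0) then (1:ℝ) else 0)) with hedef
    have hdecomp : ∀ p : ℕ, ∑ j ∈ range (M+1), ∑ k ∈ range (M+1),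
        c p * w j * w k * (if (N:ℤ) ∣ ((p:ℤ)+j-k) then (N:ℝ) else 0) = N * (s p + e p) := by
      intro p
      simp only [hsdef, hedef]
      rw [mul_add, Finset.mul_sum, Finset.mul_sum, ← Finset.sum_add_distrib]
      apply Finset.sum_congr rfl; intro j _
      rw [Finset.mul_sum, Finset.mul_sum, ← Finset.sum_add_distrib]
      apply Finset.sum_congr rfl; intro k _
      by_cases h1 : ((p:ℤ)+j-k = 0)
      · have h2 : (N:ℤ) ∣ ((p:ℤ)+j-k) := by rw [h1]; exact dvd_zero _
        simp only [if_pos h1, if_pos h2]; ring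
      · by_cases h2 : (N:ℤ) ∣ ((p:ℤ)+j-k)
        · simp only [if_pos h2, if_neg h1]; ring
        · simp only [if_neg h2, if_neg h1]; ring
    have hs0 : ∀ p ∉ range (M+1), s p = 0 := by
      intro p hp
      rw [Finset.mem_range, not_lt] at hp
      simp only [hsdef]
      apply Finset.sum_eq_zero; intro j hj
      apply Finset.sum_eq_zero; intro k hk
      rw [Finset.mem_range] at hj hk
      rw [if_neg (by omega), mul_zero]
    have hssum : Summable s := summable_of_ne_finset_zero hs0
    have hB' : ∀ p, |e p| ≤ |c p| * B := by
      intro p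
      simp only [hedef]
      calc |∑ j ∈ range (M+1), ∑ k ∈ range (M+1),
              c p * w j * w k * ((if (N:ℤ) ∣ ((p:ℤ)+j-k) then (1:ℝ) else 0)
                - (if ((p:ℤ)+j-k = 0) then (1:ℝ) else 0))|
          ≤ ∑ j ∈ range (M+1), |∑ k ∈ range (M+1),
              c p * w j * w k * ((if (N:ℤ) ∣ ((p:ℤ)+j-k) then (1:ℝ) else 0)
                - (if ((p:ℤ)+j-k = 0) then (1:ℝ) else 0))| := Finset.abs_sum_le_sum_abs _ _
        _ ≤ ∑ j ∈ range (M+1), ∑ k ∈ range (M+1),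
              |c p * w j * w k * ((if (N:ℤ) ∣ ((p:ℤ)+j-k) then (1:ℝ) else 0)
                - (if ((p:ℤ)+j-k = 0) then (1:ℝ) else 0))| :=
            Finset.sum_le_sum (fun j _ => Finset.abs_sum_le_sum_abs _ _)
        _ ≤ ∑ j ∈ range (M+1), ∑ k ∈ range (M+1), |c p| * (|w j| * |w k|) := by
            apply Finset.sum_le_sum; intro j _
            apply Finset.sum_le_sum; intro k _
            have hδ : |(if (N:ℤ) ∣ ((p:ℤ)+j-k) then (1:ℝ) else 0)
                - (if ((p:ℤ)+j-k = 0) then (1:ℝ) else 0)| ≤ 1 := by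
              by_cases h1 : (N:ℤ) ∣ ((p:ℤ)+j-k) <;> by_cases h2 : ((p:ℤ)+j-k = 0) <;>
                simp [h1, h2]
            rw [abs_mul]
            calc |c p * w j * w k| * |(if (N:ℤ) ∣ ((p:ℤ)+j-k) then (1:ℝ) else 0)
                - (if ((p:ℤ)+j-k = 0) then (1:ℝ) else 0)|
                ≤ |c p * w j * w k| * 1 := mul_le_mul_of_nonneg_left hδ (abs_nonneg _)
              _ = |c p| * (|w j| * |w k|) := by rw [mul_one, abs_mul, abs_mul]; ring
        _ = |c p| * B := by
            rw [hB, Finset.mul_sum]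
            exact Finset.sum_congr rfl fun j _ => by rw [Finset.mul_sum]
    have hesum : Summable e :=
      Summable.of_norm_bounded (hc.mul_right B)
        (fun p => by rw [Real.norm_eq_abs]; exact hB' p)
    -- 0 ≤ S + E
    rw [hcalc] at h0
    have h4 : 0 ≤ ∑' p : ℕ, (N:ℝ) * (s p + e p) := h0.trans_eq (tsum_congr hdecomp)
    clear hstep3 hA hsum2 hcalc h0 hsumG hconjv hprod habsv habsζ hζ0
    clear_value G P v ζ
    clear hGdef hPdef hvdef hζdef G P v ζ
    have h5 : ∑' p : ℕ, (N:ℝ) * (s p + e p) = N * ((∑' p, s p) + ∑' p, e p) := by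
      rw [tsum_mul_left, Summable.tsum_add hssum hesum]
    have hNpos : (0:ℝ) < N := by exact_mod_cast hN
    have h6 : 0 ≤ (∑' p, s p) + ∑' p, e p := by nlinarith [h4, h5]
    -- tsum s = S
    have hts : ∑' p, s p = S := by
      rw [tsum_eq_sum hs0]
      have hSalt : S = ∑ p ∈ range (M+1), ∑ t ∈ range (M+1-p), c p * w t * w (p+t) := by
        rw [hS]
        have h8 : ∀ j ∈ range (M+1), (∑ p ∈ range (j+1), c p * w (j-p)) * w j
            = ∑ p ∈ range (j+1), (fun p t => c p * w t * w (p+t)) p (j-p) := by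
          intro j hj
          rw [Finset.sum_mul]
          apply Finset.sum_congr rfl; intro p hp
          rw [Finset.mem_range] at hj hp
          simp only []
          have h10 : p + (j - p) = j := by omega
          rw [h10]
        rw [Finset.sum_congr rfl h8]
        exact tri (fun p t => c p * w t * w (p + t)) (M+1)
      rw [hSalt]
      apply Finset.sum_congr rfl
      intro p hp
      rw [Finset.mem_range] at hp
      have h9 : ∀ j ∈ range (M+1), ∑ k ∈ range (M+1),
          c p * w j * w k * (if ((p:ℤ)+j-k = 0) then (1:ℝ) else 0)
          = if p + j ∈ range (M+1) then c p * w j * w (p+j) else 0 := by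
        intro j _
        rw [← Finset.sum_ite_eq (range (M+1)) (p+j) (fun k => c p * w j * w k)]
        apply Finset.sum_congr rfl
        intro k hk
        by_cases h : p + j = k
        · rw [if_pos h, if_pos (by omega), mul_one]
        · rw [if_neg h, if_neg (by omega), mul_zero]
      simp only [hsdef]
      rw [Finset.sum_congr rfl h9, ← Finset.sum_filter]
      apply Finset.sum_congr
      · ext j
        simp only [Finset.mem_filter, Finset.mem_range]
        omega
      · intro t _; rfl
    -- error term vanishes for small p and is bounded
    have he0 : ∀ p ∈ range (q+1), e p = 0 := by
      intro p hp
      rw [Finset.mem_range] at hp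
      simp only [hedef]
      apply Finset.sum_eq_zero; intro j hj
      apply Finset.sum_eq_zero; intro k hk
      rw [Finset.mem_range] at hj hk
      by_cases h1 : ((p:ℤ)+j-k = 0)
      · rw [if_pos h1, if_pos (h1 ▸ dvd_zero _)]; ring
      · have h2 : ¬ (N:ℤ) ∣ ((p:ℤ)+j-k) := by
          intro hd
          exact h1 (Int.eq_zero_of_abs_lt_dvd hd (abs_lt.2 ⟨by omega, by omega⟩))
        rw [if_neg h1, if_neg h2]
        simp
    have hE : ∑' p, e p = ∑' i, e (i + (q+1)) := by
      have h11 := Summable.sum_add_tsum_nat_add (q+1) hesum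
      have h12 := Finset.sum_eq_zero he0
      linarith
    have hsum_shift : Summable (fun i => e (i + (q+1))) := (summable_nat_add_iff (q+1)).2 hesum
    have habs : |∑' i, e (i + (q+1))| ≤ (∑' i, |c (i + (q+1))|) * B := by
      calc |∑' i, e (i + (q+1))| ≤ ∑' i, |e (i + (q+1))| := by
            have h12 := norm_tsum_le_tsum_norm
              (f := fun i => e (i+(q+1))) (by simpa [Real.norm_eq_abs] using hsum_shift.abs)
            simpa [Real.norm_eq_abs] using h12
        _ ≤ ∑' i, |c (i + (q+1))| * B := by
            apply Summable.tsum_le_tsum (fun i => hB' (i + (q+1))) hsum_shift.abs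
            exact (summable_nat_add_iff (f := fun p => |c p| * B) (q+1)).2 (hc.mul_right B)
        _ = (∑' i, |c (i + (q+1))|) * B := tsum_mul_right
    rw [hts, hE] at h6
    have h13 := (abs_le.1 habs).2
    linarith
  -- pass to the limit
  have h1 := tendsto_sum_nat_add (fun i => |c i|)
  have h2 : Tendsto (fun q : ℕ => ∑' i : ℕ, |c (i + (q+1))|) atTop (nhds 0) := by
    have h3 : Tendsto (fun q : ℕ => q + 1) atTop atTop := Filter.tendsto_add_atTop_nat 1
    exact h1.comp h3
  have hlim : Tendsto (fun q : ℕ => -((∑' i : ℕ, |c (i + (q+1))|) * B)) atTop (nhds 0) := by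
    have := (h2.mul_const B).neg
    simpa using this
  exact le_of_tendsto hlim (Filter.Eventually.of_forall key)

theorem stmt_13 (g : ℕ → ℝ)
    (hg : ∀ r : ℝ, 1 < r → Summable (fun j : ℕ => |g j| * r⁻¹ ^ j))
    (hpos : ∀ z : ℂ, 1 < ‖z‖ → 0 ≤ (∑' j : ℕ, (g j : ℂ) * z⁻¹ ^ j).re) :
    ∀ M : ℕ, ∀ W : ℕ → ℝ,
      0 ≤ ∑ j ∈ Finset.range (M + 1),
            (∑ p ∈ Finset.range (j + 1), g p * W (j - p)) * W j := by
  intro M W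
  set Q' : ℝ → ℝ := fun t => ∑ j ∈ Finset.range (M + 1),
      (∑ p ∈ Finset.range (j + 1), (g p * t ^ p) * (W (j - p) * t ^ (j - p))) * (W j * t ^ j)
    with hQ'
  have hQ'cont : Continuous Q' := by
    apply continuous_finset_sum
    intro j _
    apply Continuous.mul
    · apply continuous_finset_sum
      intro p _
      fun_prop
    · fun_prop
  have hQpos : ∀ r : ℝ, 1 < r → 0 ≤ Q' r⁻¹ := by
    intro r hr
    have hr0 : (0:ℝ) < r := lt_trans one_pos hr
    have hsum : Summable (fun p => |g p * r⁻¹ ^ p|) := by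
      have h1 := hg r hr
      have h2 : ∀ p : ℕ, |g p * r⁻¹ ^ p| = |g p| * r⁻¹ ^ p := by
        intro p
        rw [abs_mul, _root_.abs_of_nonneg (pow_nonneg (inv_nonneg.2 hr0.le) p)]
      rw [funext h2]
      exact h1
    have hcirc : ∀ v : ℂ, ‖v‖ = 1 →
        0 ≤ (∑' p : ℕ, ((g p * r⁻¹ ^ p : ℝ) : ℂ) * v ^ p).re := by
      intro v hv
      have hv0 : v ≠ 0 := by
        intro h; rw [h] at hv; simp at hv
      have hz : 1 < ‖(r:ℂ) * v⁻¹‖ := by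
        rw [norm_mul, norm_inv, hv, inv_one, mul_one, Complex.norm_real, Real.norm_eq_abs, abs_of_pos hr0]
        exact hr
      have hp := hpos ((r:ℂ) * v⁻¹) hz
      have heq : ∀ p : ℕ, (g p : ℂ) * ((r:ℂ) * v⁻¹)⁻¹ ^ p
          = ((g p * r⁻¹ ^ p : ℝ) : ℂ) * v ^ p := by
        intro p
        rw [mul_inv, inv_inv]
        push_cast
        rw [mul_pow]
        ring
      rw [tsum_congr heq] at hp
      exact hp
    have hcore := core (fun p => g p * r⁻¹ ^ p) (fun j => W j * r⁻¹ ^ j) M hsum hcirc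
    simpa [hQ'] using hcore
  have hlim : Filter.Tendsto (fun r : ℝ => Q' r⁻¹) (nhdsWithin 1 (Set.Ioi 1))
      (nhds (Q' 1⁻¹)) := by
    have h1 : Filter.Tendsto (fun r : ℝ => r⁻¹) (nhdsWithin 1 (Set.Ioi 1)) (nhds 1⁻¹) :=
      ((continuousAt_inv₀ one_ne_zero).tendsto).mono_left nhdsWithin_le_nhds
    exact (hQ'cont.tendsto _).comp h1
  have h2 : 0 ≤ Q' 1⁻¹ :=
    ge_of_tendsto hlim (eventually_nhdsWithin_of_forall (fun r hr => hQpos r hr))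
  have h3 : Q' 1⁻¹ = ∑ j ∈ Finset.range (M + 1),
      (∑ p ∈ Finset.range (j + 1), g p * W (j - p)) * W j := by
    rw [hQ']
    simp
  linarith
end

section
/- Converse direction of the positivity characterization: let $(g_j)_{j\ge0}$ be a real sequence with $G(z)=\sum_{j\ge0} g_j z^{-j}$ absolutely convergent and analytic for $|z|>1$. If for every integer $M\ge0$ and all reals $W_0,\dots,W_M$ one has $\sum_{j=0}^M\left(\sum_{p=0}^j g_p W_{j-p}\right) W_j \ge 0$, then $\Re G(z)\ge0$ for all $|z|>1$. -/
theorem stmt_14 (g : ℕ → ℝ)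
    (hg : ∀ r : ℝ, 1 < r → Summable (fun j : ℕ => |g j| * r⁻¹ ^ j))
    (hform : ∀ M : ℕ, ∀ W : ℕ → ℝ,
      0 ≤ ∑ j ∈ Finset.range (M + 1),
            (∑ p ∈ Finset.range (j + 1), g p * W (j - p)) * W j) :
    ∀ z : ℂ, 1 < ‖z‖ → 0 ≤ (∑' j : ℕ, (g j : ℂ) * z⁻¹ ^ j).re := by
  intro z hz
  set w : ℂ := z⁻¹ with hw
  have hzne : z ≠ 0 := by
    intro h; rw [h] at hz; simp at hz; linarith
  have hwabs : ‖w‖ = ‖z‖⁻¹ := by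
    simp [hw, map_inv₀]
  have hwlt : ‖w‖ < 1 := by
    rw [hwabs]
    exact inv_lt_one_of_one_lt₀ hz
  set t : ℝ := Complex.normSq w with ht
  have ht0 : 0 ≤ t := Complex.normSq_nonneg w
  have ht1 : t < 1 := by
    rw [ht, ← Complex.sq_norm]
    nlinarith [norm_nonneg w]
  -- summability facts
  have habs : Summable (fun p : ℕ => |g p| * ‖z‖⁻¹ ^ p) := hg _ hz
  set c : ℕ → ℝ := fun p => g p * (w ^ p).re with hc
  have hcle : ∀ p, |c p| ≤ |g p| * ‖z‖⁻¹ ^ p := by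
    intro p
    rw [hc]
    rw [abs_mul]
    gcongr
    calc |(w ^ p).re| ≤ ‖w ^ p‖ := Complex.abs_re_le_norm _
      _ = ‖z‖⁻¹ ^ p := by rw [norm_pow, hwabs]
  have hcs : Summable c :=
    Summable.of_abs (habs.of_nonneg_of_le (fun p => abs_nonneg _) hcle)
  have hcabs : Summable (fun p => |c p|) :=
    habs.of_nonneg_of_le (fun p => abs_nonneg _) hcle
  have hTs : Summable (fun p : ℕ => (g p : ℂ) * w ^ p) := by
    apply Summable.of_norm
    apply habs.of_nonneg_of_le (fun p => norm_nonneg _)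
    intro p
    rw [norm_mul, norm_pow, Complex.norm_real, Real.norm_eq_abs,
      hwabs]
  -- real part of the tsum
  have hreT : (∑' j : ℕ, (g j : ℂ) * w ^ j).re = ∑' p, c p := by
    rw [Complex.re_tsum hTs]
    congr 1
    funext p
    simp [hc, Complex.mul_re]
  rw [hreT]
  -- key pointwise identity
  have hkey : ∀ j p : ℕ, p ≤ j →
      (w ^ (j - p)).re * (w ^ j).re + (w ^ (j - p)).im * (w ^ j).im
        = (w ^ p).re * t ^ (j - p) := by
    intro j p hpj
    have h1 : w ^ j = w ^ (j - p) * w ^ p := by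
      rw [← pow_add]; congr 1; omega
    have h2 : w ^ (j - p) * (starRingEnd ℂ) (w ^ j)
        = ((t ^ (j - p) : ℝ) : ℂ) * (starRingEnd ℂ) (w ^ p) := by
      rw [h1, map_mul, ← mul_assoc, Complex.mul_conj, map_pow, ← ht]
    have h3 := congrArg Complex.re h2
    simp only [Complex.mul_re, Complex.conj_re, Complex.conj_im, Complex.ofReal_re,
      Complex.ofReal_im] at h3
    nlinarith [h3]
  -- nonnegativity of the combined form
  set F : ℕ → ℝ := fun M => ∑ j ∈ Finset.range (M + 1),
      ∑ p ∈ Finset.range (j + 1), g p * ((w ^ p).re * t ^ (j - p)) with hF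
  have hFnn : ∀ M, 0 ≤ F M := by
    intro M
    have h1 := hform M (fun j => (w ^ j).re)
    have h2 := hform M (fun j => (w ^ j).im)
    have h3 : F M = (∑ j ∈ Finset.range (M + 1),
          (∑ p ∈ Finset.range (j + 1), g p * (w ^ (j - p)).re) * (w ^ j).re)
        + ∑ j ∈ Finset.range (M + 1),
          (∑ p ∈ Finset.range (j + 1), g p * (w ^ (j - p)).im) * (w ^ j).im := by
      rw [hF, ← Finset.sum_add_distrib]
      apply Finset.sum_congr rfl
      intro j _
      rw [Finset.sum_mul, Finset.sum_mul, ← Finset.sum_add_distrib]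
      apply Finset.sum_congr rfl
      intro p hp
      have hpj : p ≤ j := by
        simp only [Finset.mem_range] at hp; omega
      rw [← hkey j p hpj]
      ring
    rw [h3]
    linarith
  -- rewrite F M via swap of sums and geometric sums
  have hswap : ∀ M, F M = ∑ p ∈ Finset.range (M + 1),
      c p * ∑ k ∈ Finset.range (M + 1 - p), t ^ k := by
    intro M
    simp only [hF]
    have hs := Finset.sum_Ico_Ico_comm 0 (M + 1)
      (fun p j => g p * ((w ^ p).re * t ^ (j - p)))
    simp only [← Finset.range_eq_Ico] at hs
    rw [← hs]
    apply Finset.sum_congr rfl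
    intro p hp
    rw [Finset.mul_sum]
    rw [Finset.sum_Ico_eq_sum_range]
    apply Finset.sum_congr rfl
    intro k _
    rw [hc]
    have : p + k - p = k := by omega
    rw [this]
    ring
  -- (1 - t) * F M = A M - B M
  set A : ℕ → ℝ := fun M => ∑ p ∈ Finset.range (M + 1), c p with hA
  set B : ℕ → ℝ := fun M => ∑ p ∈ Finset.range (M + 1), c p * t ^ (M + 1 - p) with hB
  have hFAB : ∀ M, (1 - t) * F M = A M - B M := by
    intro M
    rw [hswap M, hA, hB, Finset.mul_sum, ← Finset.sum_sub_distrib]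
    apply Finset.sum_congr rfl
    intro p hp
    have hgeom : (1 - t) * ∑ k ∈ Finset.range (M + 1 - p), t ^ k
        = 1 - t ^ (M + 1 - p) := by
      have := geom_sum_mul t (M + 1 - p)
      nlinarith [this]
    calc (1 - t) * (c p * ∑ k ∈ Finset.range (M + 1 - p), t ^ k)
        = c p * ((1 - t) * ∑ k ∈ Finset.range (M + 1 - p), t ^ k) := by ring
      _ = c p * (1 - t ^ (M + 1 - p)) := by rw [hgeom]
      _ = c p - c p * t ^ (M + 1 - p) := by ring
  -- limits
  have hAlim : Filter.Tendsto A Filter.atTop (nhds (∑' p, c p)) := by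
    have := hcs.hasSum.tendsto_sum_nat
    exact this.comp (Filter.tendsto_add_atTop_nat 1)
  have hBlim : Filter.Tendsto B Filter.atTop (nhds 0) := by
    -- dominate by the Cauchy product of |c| and t^·
    have htgeo : Summable (fun k : ℕ => t ^ k) := summable_geometric_of_lt_one ht0 ht1
    have htgeoabs : Summable (fun k : ℕ => ‖t ^ k‖) := by
      apply htgeo.congr
      intro k
      rw [Real.norm_eq_abs, abs_of_nonneg (pow_nonneg ht0 k)]
    have hcabs' : Summable (fun p : ℕ => ‖|c p|‖) := by
      apply hcabs.congr
      intro p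
      rw [Real.norm_eq_abs, abs_abs]
    have hd : Summable (fun n : ℕ => ∑ k ∈ Finset.range (n + 1), |c k| * t ^ (n - k)) :=
      (summable_norm_sum_mul_range_of_summable_norm hcabs' htgeoabs).of_norm
    have hdlim := hd.tendsto_atTop_zero
    have hdlim' : Filter.Tendsto
        (fun M : ℕ => ∑ k ∈ Finset.range (M + 2), |c k| * t ^ (M + 1 - k))
        Filter.atTop (nhds 0) := by
      exact hdlim.comp (Filter.tendsto_add_atTop_nat 1)
    apply squeeze_zero_norm _ hdlim'
    intro M
    rw [hB, Real.norm_eq_abs]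
    calc |∑ p ∈ Finset.range (M + 1), c p * t ^ (M + 1 - p)|
        ≤ ∑ p ∈ Finset.range (M + 1), |c p * t ^ (M + 1 - p)| :=
          Finset.abs_sum_le_sum_abs _ _
      _ = ∑ p ∈ Finset.range (M + 1), |c p| * t ^ (M + 1 - p) := by
          apply Finset.sum_congr rfl
          intro p _
          rw [abs_mul, abs_of_nonneg (pow_nonneg ht0 _)]
      _ ≤ ∑ p ∈ Finset.range (M + 2), |c p| * t ^ (M + 1 - p) := by
          apply Finset.sum_le_sum_of_subset_of_nonneg
          · exact Finset.range_subset_range.mpr (by omega)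
          · intro i _ _
            exact mul_nonneg (abs_nonneg _) (pow_nonneg ht0 _)
  have hABlim : Filter.Tendsto (fun M => A M - B M) Filter.atTop
      (nhds (∑' p, c p)) := by
    have := hAlim.sub hBlim
    simpa using this
  have hlim2 : Filter.Tendsto (fun M => (1 - t) * F M) Filter.atTop
      (nhds (∑' p, c p)) := by
    apply hABlim.congr
    intro M
    exact (hFAB M).symm
  have hnn : ∀ M, 0 ≤ (1 - t) * F M := fun M =>
    mul_nonneg (by linarith) (hFnn M)
  exact ge_of_tendsto' hlim2 hnn
end

section
/- Let $0<\alpha<1$ and $z=e^{s_0+i\eta}$ with $s_0>0$. Then $\Re\left[\left(\frac{(3-z^{-1})(1-z^{-1})}{2}\right)^{-\alpha}\right] \ge 0$, where the principal branch of the power is used. -/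
theorem stmt_16 (α s0 η : ℝ) (hα0 : 0 < α) (hα1 : α < 1) (hs0 : 0 < s0)
    (z : ℂ) (hz : z = Complex.exp (↑s0 + ↑η * Complex.I)) :
    0 ≤ ((((3 - z⁻¹) * (1 - z⁻¹)) / 2) ^ (-(α : ℂ))).re := by
  set u : ℂ := z⁻¹ with hu
  have habs : ‖u‖ < 1 := by
    rw [hu, hz, ← Complex.exp_neg, Complex.norm_exp]
    simp only [Complex.neg_re, Complex.add_re, Complex.ofReal_re, Complex.mul_re,
      Complex.ofReal_im, Complex.I_re, Complex.I_im]
    rw [Real.exp_lt_one_iff]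
    nlinarith
  set w : ℂ := ((3 - u) * (1 - u)) / 2 with hw
  have hsq : u.re ^ 2 + u.im ^ 2 < 1 := by
    have := Complex.sq_norm u
    have h2 : ‖u‖ ^ 2 < 1 := by nlinarith [norm_nonneg u]
    rw [Complex.sq_norm, Complex.normSq_apply] at h2
    nlinarith
  have hre : 0 < w.re := by
    rw [hw]
    simp only [Complex.div_re, Complex.mul_re, Complex.mul_im, Complex.sub_re, Complex.sub_im]
    norm_num
    nlinarith [sq_nonneg (1 - u.re)]
  have hne : w ≠ 0 := fun h => by simp [h] at hre
  have harg : |Complex.arg w| < Real.pi / 2 :=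
    Complex.abs_arg_lt_pi_div_two_iff.mpr (Or.inl hre)
  rw [Complex.cpow_def_of_ne_zero hne, Complex.exp_re]
  apply mul_nonneg (Real.exp_nonneg _)
  have him : (Complex.log w * -(α : ℂ)).im = -(α * Complex.arg w) := by
    simp [Complex.mul_im, Complex.log_im]
    ring
  rw [him]
  apply Real.cos_nonneg_of_mem_Icc
  constructor
  · rw [abs_lt] at harg
    nlinarith [harg.1, harg.2, abs_nonneg (Complex.arg w)]
  · rw [abs_lt] at harg
    nlinarith [harg.1, harg.2]
end
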